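/- Let N and M be unimodular integral lattices and φ : N ⊕ M(2) → N(2) ⊕ M the map n ⊕ m ↦ n ⊕ 2m. The image of φ is exactly the set of elements of N(2) ⊕ M of even divisibility, i.e., elements v with (v, w) even for all w ∈ N(2) ⊕ M. -/
import Mathlib


/-- **Image of the twist map.** Let `N`, `M` be unimodular integral lattices and
`φ : N ⊕ M(2) → N(2) ⊕ M`, `n ⊕ m ↦ n ⊕ 2m`.  The image of `φ` is exactly the set of
elements of `N(2) ⊕ M` of even divisibility, i.e. those `v` with
`(v, w)_{N(2)⊕M} = 2 * bN v.1 w.1 + bM v.2 w.2` even for all `w`. -/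
theorem twist_map_range_eq_even_divisibility
    (N M : Type*) [AddCommGroup N] [Module ℤ N] [AddCommGroup M] [Module ℤ M]
    [Module.Free ℤ N] [Module.Finite ℤ N] [Module.Free ℤ M] [Module.Finite ℤ M]
    (bN : LinearMap.BilinForm ℤ N) (bM : LinearMap.BilinForm ℤ M)
    (hNsymm : ∀ x y, bN x y = bN y x) (hMsymm : ∀ x y, bM x y = bM y x)
    (hNuni : Function.Bijective fun x => bN x)
    (hMuni : Function.Bijective fun x => bM x) :
    {v : N × M | ∀ w : N × M, Even (2 * bN v.1 w.1 + bM v.2 w.2)}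
      = Set.range (fun p : N × M => (p.1, (2 : ℤ) • p.2)) := by
  ext v
  simp only [Set.mem_setOf_eq, Set.mem_range]
  constructor
  · intro hv
    -- the condition reduces to : bM v.2 w is even for all w
    have he : ∀ w : M, Even (bM v.2 w) := by
      intro w
      have := hv (0, w)
      simpa using this
    have hd : ∀ w : M, 2 ∣ bM v.2 w := fun w => (he w).two_dvd
    -- build the halved functional
    let g : M →ₗ[ℤ] ℤ :=
      { toFun := fun x => bM v.2 x / 2
        map_add' := by
          intro x y
          obtain ⟨k, hk⟩ := hd x
          obtain ⟨l, hl⟩ := hd y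
          simp only [map_add, hk, hl]; omega
        map_smul' := by
          intro c x
          obtain ⟨k, hk⟩ := hd x
          simp only [map_smul, hk, smul_eq_mul, eq_intCast, Int.cast_id]
          rw [show c * (2*k) = 2*(c*k) by ring, Int.mul_ediv_cancel_left _ two_ne_zero,
            Int.mul_ediv_cancel_left _ two_ne_zero] }
    obtain ⟨m, hm⟩ := hMuni.2 g
    have h2 : bM v.2 = bM ((2 : ℤ) • m) := by
      ext x
      have hg : bM m x = bM v.2 x / 2 := by
        rw [show bM m = g from hm]; rfl
      obtain ⟨k, hk⟩ := hd x
      have hsm : bM ((2:ℤ) • m) x = 2 * bM m x := by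
        simp [two_zsmul, map_add, two_mul]
      simp only [hsm, hg, hk]
      omega
    have : v.2 = (2 : ℤ) • m := hMuni.1 h2
    exact ⟨(v.1, m), by simp [← this]⟩
  · rintro ⟨p, hp⟩
    intro w
    have h1 : v.1 = p.1 := by rw [← hp]
    have h2 : v.2 = (2 : ℤ) • p.2 := by rw [← hp]
    rw [h1, h2]
    refine ⟨bN p.1 w.1 + bM p.2 w.2, ?_⟩
    have : bM ((2:ℤ) • p.2) w.2 = 2 * bM p.2 w.2 := by
      simp [two_zsmul, map_add, two_mul]
    rw [this]; ring
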